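/- Define T : ℤ → ℤ by T(n) = (7n+1)/4 if n ≡ 1 (mod 4), T(n) = (7n-1)/4 if n ≡ 3 (mod 4), and T(n) = n/2 if n is even. Then for any integer l ≥ 0, T induces a map from residues modulo 2^(l+2) to residues modulo 2^l under which each residue class modulo 2^l has exactly 4 preimages; i.e., the output of T is uniformly distributed modulo 2^l when the input is uniformly distributed modulo 2^(l+2). -/

import Mathlib

def T (n : ℕ) : ℕ :=
  if n % 4 = 1 then (7 * n + 1) / 4
  else if n % 4 = 3 then (7 * n - 1) / 4
  else n / 2

lemma T_even {n : ℕ} (h : n % 2 = 0) : T n = n / 2 := by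
  unfold T
  have h1 : n % 4 ≠ 1 := by omega
  have h3 : n % 4 ≠ 3 := by omega
  simp [h1, h3]

lemma T_one (t : ℕ) : T (4 * t + 1) = 7 * t + 2 := by
  unfold T
  have h : (4 * t + 1) % 4 = 1 := by omega
  simp [h]; omega

lemma T_three (t : ℕ) : T (4 * t + 3) = 7 * t + 5 := by
  unfold T
  have h1 : (4 * t + 3) % 4 = 3 := by omega
  have h2 : (4 * t + 3) % 4 ≠ 1 := by omega
  simp [h1, h2]; omega

lemma T_period (N a q : ℕ) : T (a + 4 * (N * q)) % N = T a % N := by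
  have hm : (a + 4 * (N * q)) % 4 = a % 4 := Nat.add_mul_mod_self_left a 4 (N * q)
  by_cases h1 : a % 4 = 1
  · have e1 : T a = (7 * a + 1) / 4 := by unfold T; simp [h1]
    have e2 : T (a + 4 * (N * q)) = (7 * (a + 4 * (N * q)) + 1) / 4 := by
      unfold T; rw [hm]; simp [h1]
    have e3 : (7 * (a + 4 * (N * q)) + 1) / 4 = (7 * a + 1) / 4 + N * (7 * q) := by
      rw [show N * (7 * q) = 7 * (N * q) by ring]; omega
    rw [e2, e3, e1, Nat.add_mul_mod_self_left]
  · by_cases h3 : a % 4 = 3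
    · have e1 : T a = (7 * a - 1) / 4 := by unfold T; simp [h1, h3]
      have e2 : T (a + 4 * (N * q)) = (7 * (a + 4 * (N * q)) - 1) / 4 := by
        unfold T; rw [hm]; simp [h1, h3]
      have e3 : (7 * (a + 4 * (N * q)) - 1) / 4 = (7 * a - 1) / 4 + N * (7 * q) := by
        rw [show N * (7 * q) = 7 * (N * q) by ring]; omega
      rw [e2, e3, e1, Nat.add_mul_mod_self_left]
    · have he : a % 2 = 0 := by omega
      have he2 : (a + 4 * (N * q)) % 2 = 0 := by omega
      rw [T_even he, T_even he2,
        show (a + 4 * (N * q)) / 2 = a / 2 + N * (2 * q) by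
          rw [show N * (2 * q) = 2 * (N * q) by ring]; omega,
        Nat.add_mul_mod_self_left]

theorem stmt_8 (l : ℕ) :
    (∀ x y : ℕ, x % 2 ^ (l + 2) = y % 2 ^ (l + 2) → T x % 2 ^ l = T y % 2 ^ l) ∧
    (∀ r : ℕ, r < 2 ^ l →
      ((Finset.range (2 ^ (l + 2))).filter (fun x => T x % 2 ^ l = r)).card = 4) := by
  set N := 2 ^ l with hNdef
  have hN : 0 < N := Nat.pow_pos (by norm_num)
  have hM : 2 ^ (l + 2) = 4 * N := by rw [pow_add]; ring
  haveI : NeZero N := ⟨hN.ne'⟩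
  have red : ∀ x : ℕ, T x % N = T (x % 2 ^ (l + 2)) % N := by
    intro x
    conv_lhs => rw [← Nat.mod_add_div x (2 ^ (l + 2))]
    rw [show 2 ^ (l + 2) * (x / 2 ^ (l + 2)) = 4 * (N * (x / 2 ^ (l + 2))) by rw [hM]; ring]
    exact T_period N _ _
  constructor
  · intro x y hxy
    rw [red x, red y, hxy]
  · have hge : ∀ r : ℕ, r < N →
        4 ≤ ((Finset.range (2 ^ (l + 2))).filter (fun x => T x % N = r)).card := by
      intro r hr
      have hcop : Nat.Coprime 7 N := Nat.Coprime.pow_right l (by norm_num)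
      have hu : IsUnit (7 : ZMod N) := by
        rw [show ((7 : ZMod N)) = ((7 : ℕ) : ZMod N) by push_cast; ring]
        exact (ZMod.isUnit_iff_coprime 7 N).mpr hcop
      have hinv : (7 : ZMod N) * (7 : ZMod N)⁻¹ = 1 := ZMod.mul_inv_of_unit _ hu
      -- solutions
      have solve : ∀ c : ℕ, ∃ t : ℕ, t < N ∧ (7 * t + c) % N = r := by
        intro c
        refine ⟨(((r : ZMod N) - c) * (7 : ZMod N)⁻¹).val, ZMod.val_lt _, ?_⟩
        have : ((7 * (((r : ZMod N) - c) * (7 : ZMod N)⁻¹).val + c : ℕ) : ZMod N)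
            = ((r : ℕ) : ZMod N) := by
          push_cast
          rw [ZMod.natCast_val, ZMod.cast_id]
          rw [mul_comm ((r : ZMod N) - (c : ZMod N)) ((7 : ZMod N)⁻¹), ← mul_assoc, hinv, one_mul]
          ring
        have := (ZMod.natCast_eq_natCast_iff _ _ _).mp this
        unfold Nat.ModEq at this
        rw [this, Nat.mod_eq_of_lt hr]
      obtain ⟨t1, ht1, ht1e⟩ := solve 2
      obtain ⟨t2, ht2, ht2e⟩ := solve 5
      -- four explicit preimages
      set S := (Finset.range (2 ^ (l + 2))).filter (fun x => T x % N = r) with hS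
      have hmem : ∀ x, x ∈ S ↔ x < 4 * N ∧ T x % N = r := by
        intro x; simp [hS, Finset.mem_filter, Finset.mem_range, hM]
      have ha : 2 * r ∈ S := by
        rw [hmem]
        constructor
        · omega
        · rw [T_even (by omega)]
          have : 2 * r / 2 = r := by omega
          rw [this, Nat.mod_eq_of_lt hr]
      have hb : 2 * r + 2 * N ∈ S := by
        rw [hmem]
        constructor
        · omega
        · rw [T_even (by omega), show (2 * r + 2 * N) / 2 = r + N by omega,
            Nat.add_mod_right, Nat.mod_eq_of_lt hr]
      have hc : 4 * t1 + 1 ∈ S := by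
        rw [hmem]
        exact ⟨by omega, by rw [T_one]; exact ht1e⟩
      have hd : 4 * t2 + 3 ∈ S := by
        rw [hmem]
        exact ⟨by omega, by rw [T_three]; exact ht2e⟩
      -- card ≥ 4
      have hsub : {2 * r, 2 * r + 2 * N, 4 * t1 + 1, 4 * t2 + 3} ⊆ S := by
        intro x hx
        simp only [Finset.mem_insert, Finset.mem_singleton] at hx
        rcases hx with h | h | h | h <;> subst h <;> assumption
      have hcard4 : ({2 * r, 2 * r + 2 * N, 4 * t1 + 1, 4 * t2 + 3} : Finset ℕ).card = 4 := by
        rw [Finset.card_insert_of_notMem (by simp; omega),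
            Finset.card_insert_of_notMem (by simp; omega),
            Finset.card_insert_of_notMem (by simp; omega),
            Finset.card_singleton]
      exact hcard4 ▸ Finset.card_le_card hsub
    intro r hr
    have hsum : ∑ s ∈ Finset.range N,
        ((Finset.range (2 ^ (l + 2))).filter (fun x => T x % N = s)).card = 2 ^ (l + 2) := by
      have h := Finset.card_eq_sum_card_fiberwise
        (s := Finset.range (2 ^ (l + 2))) (t := Finset.range N) (f := fun x => T x % N)
        (fun x _ => Finset.mem_range.mpr (Nat.mod_lt _ hN))
      rw [Finset.card_range] at h
      simpa using h.symm
    by_contra hne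
    have h5 : 4 < ((Finset.range (2 ^ (l + 2))).filter (fun x => T x % N = r)).card :=
      lt_of_le_of_ne (hge r hr) (Ne.symm hne)
    have hlt : ∑ _s ∈ Finset.range N, 4 <
        ∑ s ∈ Finset.range N,
          ((Finset.range (2 ^ (l + 2))).filter (fun x => T x % N = s)).card :=
      Finset.sum_lt_sum (fun i hi => hge i (Finset.mem_range.mp hi))
        ⟨r, Finset.mem_range.mpr hr, h5⟩
    rw [Finset.sum_const, Finset.card_range, smul_eq_mul, hsum] at hlt
    omega
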